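/- arXiv:1906.10505 — 4 statements merged into one kernel-verified Lean document; each statement's English description precedes it below -/
import Mathlib

section
/- The space (X, τ^α) is nodec, i.e., every nowhere dense subset of (X, τ^α) is closed in (X, τ^α). -/
open Topology

def alphaOpens (X : Type*) [TopologicalSpace X] : Set (Set X) :=
  {U | ∃ V N : Set X, IsOpen V ∧ IsNowhereDense N ∧ U = V \ N}

def tAlpha (X : Type*) [TopologicalSpace X] : TopologicalSpace X :=
  TopologicalSpace.generateFrom (alphaOpens X)

lemma nwd_union {X : Type*} [TopologicalSpace X] {N M : Set X}
    (hN : IsNowhereDense N) (hM : IsNowhereDense M) : IsNowhereDense (N ∪ M) := by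
  have hN' : interior (closure N) = ∅ := hN
  have hM' : interior (closure M) = ∅ := hM
  show interior (closure (N ∪ M)) = ∅
  rw [closure_union]
  have h1 : interior (closure N ∪ closure M) \ closure N ⊆ interior (closure M) := by
    apply interior_maximal
    · intro x hx
      rcases interior_subset hx.1 with h | h
      · exact absurd h hx.2
      · exact h
    · exact isOpen_interior.sdiff isClosed_closure
  rw [hM'] at h1
  have h2 : interior (closure N ∪ closure M) ⊆ interior (closure N) := by
    apply interior_maximal
    · intro x hx
      by_contra hc
      exact (h1 ⟨hx, hc⟩).elim
    · exact isOpen_interior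
  rw [hN'] at h2
  exact Set.subset_empty_iff.mp h2

lemma alpha_open_of_open {X : Type*} [TopologicalSpace X] {U : Set X} (h : IsOpen U) :
    IsOpen[tAlpha X] U :=
  TopologicalSpace.GenerateOpen.basic _ ⟨U, ∅, h, isNowhereDense_empty, by simp⟩

lemma alpha_basis (X : Type*) [TopologicalSpace X] :
    @TopologicalSpace.IsTopologicalBasis X (tAlpha X) (alphaOpens X) := by
  refine @TopologicalSpace.IsTopologicalBasis.mk X (tAlpha X) (alphaOpens X) ?_ ?_ rfl
  · rintro t1 ⟨V1, N1, hV1, hN1, rfl⟩ t2 ⟨V2, N2, hV2, hN2, rfl⟩ x hx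
    refine ⟨(V1 ∩ V2) \ (N1 ∪ N2), ⟨V1 ∩ V2, N1 ∪ N2, hV1.inter hV2, nwd_union hN1 hN2, rfl⟩,
      ?_, ?_⟩
    · simp only [Set.mem_inter_iff, Set.mem_diff, Set.mem_union] at hx ⊢
      tauto
    · intro y hy
      simp only [Set.mem_inter_iff, Set.mem_diff, Set.mem_union] at hy ⊢
      tauto
  · apply Set.eq_univ_of_univ_subset
    intro x _
    exact ⟨Set.univ, ⟨Set.univ, ∅, isOpen_univ, isNowhereDense_empty, by simp⟩, trivial⟩

theorem tauAlpha_nodec {X : Type*} [TopologicalSpace X] :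
    ∀ s : Set X, @IsNowhereDense X (tAlpha X) s → @IsClosed X (tAlpha X) s := by
  intro s hs
  have hs' : @interior X (tAlpha X) (@closure X (tAlpha X) s) = ∅ := hs
  -- First show s is nowhere dense in the original topology τ.
  have hnwd : IsNowhereDense s := by
    show interior (closure s) = ∅
    by_contra h
    obtain ⟨x, hx⟩ := Set.nonempty_iff_ne_empty.mpr h
    set U : Set X := interior (closure s) with hUdef
    have hUopen : IsOpen U := isOpen_interior
    set D : Set X := @closure X (tAlpha X) s with hDdef
    have hDclosed : @IsClosed X (tAlpha X) D := @isClosed_closure X (tAlpha X) s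
    have hsD : s ⊆ D := @subset_closure X (tAlpha X) s
    -- D ⊆ closure s since closure s is τ-closed, hence τα-closed
    have hclcl : @IsClosed X (tAlpha X) (closure s) := by
      rw [← @isOpen_compl_iff X (closure s) (tAlpha X)]
      exact alpha_open_of_open isClosed_closure.isOpen_compl
    have hDsub : D ⊆ closure s :=
      @closure_minimal X (tAlpha X) s (closure s) subset_closure hclcl
    -- U is not contained in D, because int_α D = ∅
    have hUD : ¬ U ⊆ D := by
      intro hsub
      have h2 : U ⊆ @interior X (tAlpha X) D :=
        @interior_maximal X (tAlpha X) D U hsub (alpha_open_of_open hUopen)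
      rw [hDdef, hs'] at h2
      exact h2 hx
    obtain ⟨y, hyU, hyD⟩ := Set.not_subset.mp hUD
    -- U \ D is τα-open and nonempty; get a basic set V \ N around y inside it
    have hUDopen : IsOpen[tAlpha X] (U \ D) :=
      @IsOpen.sdiff X U D (tAlpha X) (alpha_open_of_open hUopen) hDclosed
    obtain ⟨t, ⟨V, N, hV, hN, rfl⟩, hyt, htsub⟩ :=
      @TopologicalSpace.IsTopologicalBasis.exists_subset_of_mem_open X (tAlpha X)
        (alphaOpens X) (alpha_basis X) y (U \ D) ⟨hyU, hyD⟩ hUDopen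
    have hN' : interior (closure N) = ∅ := hN
    -- W := (V ∩ U) \ closure N is nonempty open
    set W : Set X := (V ∩ U) \ closure N with hWdef
    have hWopen : IsOpen W := (hV.inter hUopen).sdiff isClosed_closure
    have hWne : W.Nonempty := by
      by_contra hW
      rw [Set.not_nonempty_iff_eq_empty, hWdef, Set.diff_eq_empty] at hW
      have h3 : V ∩ U ⊆ interior (closure N) := interior_maximal hW (hV.inter hUopen)
      rw [hN'] at h3
      exact h3 ⟨hyt.1, hyU⟩
    obtain ⟨z, hz⟩ := hWne
    -- W ⊆ closure s so W meets s
    have hzcl : z ∈ closure s := interior_subset hz.1.2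
    obtain ⟨w, hwW, hws⟩ := mem_closure_iff.mp hzcl W hWopen hz
    -- But W ⊆ V \ N ⊆ U \ D ⊆ sᶜ, contradiction
    have hwVN : w ∈ V \ N := ⟨hwW.1.1, fun hn => hwW.2 (subset_closure hn)⟩
    exact (htsub hwVN).2 (hsD hws)
  -- Now sᶜ = univ \ s is τα-open, so s is τα-closed
  rw [← @isOpen_compl_iff X s (tAlpha X)]
  exact TopologicalSpace.GenerateOpen.basic _
    ⟨Set.univ, s, isOpen_univ, hnwd, (Set.compl_eq_univ_diff s)⟩
end

section
/- If (X, τ) is selectively separable, then (X, τ^α) is selectively separable, and conversely. -/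
open Set TopologicalSpace

/-- A space is selectively separable (SS) if for every sequence of dense sets `D n`
there are finite `F n ⊆ D n` with `⋃ n, F n` dense. -/
def SelSep (Z : Type*) [TopologicalSpace Z] : Prop :=
  ∀ D : ℕ → Set Z, (∀ n, Dense (D n)) →
    ∃ F : ℕ → Set Z, (∀ n, F n ⊆ D n) ∧ (∀ n, (F n).Finite) ∧ Dense (⋃ n, F n)

lemma IsNowhereDense.union' {X : Type*} [TopologicalSpace X] {s t : Set X}
    (hs : IsNowhereDense s) (ht : IsNowhereDense t) : IsNowhereDense (s ∪ t) := by
  unfold IsNowhereDense at *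
  rw [closure_union]
  have h1 : interior (closure s ∪ closure t) \ closure s ⊆ interior (closure t) := by
    apply (isOpen_interior.sdiff isClosed_closure).subset_interior_iff.mpr ?_ |>.trans
      (interior_mono subset_rfl)
    intro x hx
    rcases interior_subset hx.1 with h | h
    · exact absurd h hx.2
    · exact h
  have h2 : interior (closure s ∪ closure t) ⊆ closure s := by
    intro x hx
    by_contra hxc
    exact absurd (ht ▸ h1 ⟨hx, hxc⟩) (notMem_empty x)
  have h3 : interior (closure s ∪ closure t) ⊆ interior (closure s) :=
    isOpen_interior.subset_interior_iff.mpr h2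
  exact eq_empty_of_subset_empty (hs ▸ h3)

lemma mem_alphaOpens_of_isOpen {X : Type*} [TopologicalSpace X] {V : Set X} (hV : IsOpen V) :
    V ∈ alphaOpens X := ⟨V, ∅, hV, isNowhereDense_empty, by simp⟩

lemma tAlpha_basic {X : Type*} [t : TopologicalSpace X] {U : Set X}
    (hU : TopologicalSpace.GenerateOpen (alphaOpens X) U) :
    ∀ x ∈ U, ∃ B ∈ alphaOpens X, x ∈ B ∧ B ⊆ U := by
  induction hU with
  | basic s hs => exact fun x hx => ⟨s, hs, hx, subset_rfl⟩
  | univ => exact fun x _ =>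
      ⟨univ, mem_alphaOpens_of_isOpen isOpen_univ, mem_univ x, subset_rfl⟩
  | inter s u _ _ ihs ihu =>
      intro x hx
      obtain ⟨B1, hB1, hxB1, hB1s⟩ := ihs x hx.1
      obtain ⟨B2, hB2, hxB2, hB2s⟩ := ihu x hx.2
      obtain ⟨V1, N1, hV1, hN1, rfl⟩ := hB1
      obtain ⟨V2, N2, hV2, hN2, rfl⟩ := hB2
      refine ⟨(V1 ∩ V2) \ (N1 ∪ N2), ⟨_, _, hV1.inter hV2, hN1.union' hN2, rfl⟩, ?_, ?_⟩
      · exact ⟨⟨hxB1.1, hxB2.1⟩, fun h => h.elim (fun h => hxB1.2 h) (fun h => hxB2.2 h)⟩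
      · intro y hy
        exact ⟨hB1s ⟨hy.1.1, fun h => hy.2 (Or.inl h)⟩,
               hB2s ⟨hy.1.2, fun h => hy.2 (Or.inr h)⟩⟩
  | sUnion S _ ih =>
      intro x hx
      obtain ⟨s, hsS, hxs⟩ := hx
      obtain ⟨B, hB, hxB, hBs⟩ := ih s hsS x hxs
      exact ⟨B, hB, hxB, hBs.trans (subset_sUnion_of_mem hsS)⟩

lemma dense_meets_basic {X : Type*} [TopologicalSpace X] {D V N : Set X}
    (hD : Dense D) (hV : IsOpen V) (hN : IsNowhereDense N) (hne : (V \ N).Nonempty) :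
    ((V \ N) ∩ D).Nonempty := by
  by_contra h
  rw [not_nonempty_iff_eq_empty] at h
  have hsub : V ∩ D ⊆ N := by
    intro x hx
    by_contra hxN
    exact absurd (h ▸ (show x ∈ (V \ N) ∩ D from ⟨⟨hx.1, hxN⟩, hx.2⟩)) (notMem_empty x)
  have h1 : V ⊆ closure N :=
    (hD.open_subset_closure_inter hV).trans (closure_mono hsub)
  have h2 : V ⊆ interior (closure N) := hV.subset_interior_iff.mpr h1
  obtain ⟨x, hx⟩ := hne
  exact absurd (hN ▸ h2 hx.1) (notMem_empty x)

lemma dense_tAlpha_iff {X : Type*} [t : TopologicalSpace X] {D : Set X} :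
    @Dense X (tAlpha X) D ↔ Dense D := by
  constructor
  · intro h
    rw [dense_iff_inter_open]
    intro U hU hUne
    exact (@dense_iff_inter_open X (tAlpha X) D).mp h U
      (TopologicalSpace.GenerateOpen.basic U (mem_alphaOpens_of_isOpen hU)) hUne
  · intro h
    rw [@dense_iff_inter_open X (tAlpha X) D]
    intro U hU hUne
    obtain ⟨x, hx⟩ := hUne
    obtain ⟨B, hB, hxB, hBU⟩ := tAlpha_basic hU x hx
    obtain ⟨V, N, hV, hN, rfl⟩ := hB
    obtain ⟨y, hy⟩ := dense_meets_basic h hV hN ⟨x, hxB⟩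
    exact ⟨y, hBU hy.1, hy.2⟩

theorem selSep_iff_selSep_tauAlpha {X : Type*} [t : TopologicalSpace X] :
    SelSep X ↔ @SelSep X (tAlpha X) := by
  constructor
  · intro h D hD
    obtain ⟨F, hF1, hF2, hF3⟩ := h D (fun n => dense_tAlpha_iff.mp (hD n))
    exact ⟨F, hF1, hF2, dense_tAlpha_iff.mpr hF3⟩
  · intro h D hD
    obtain ⟨F, hF1, hF2, hF3⟩ := h D (fun n => dense_tAlpha_iff.mpr (hD n))
    exact ⟨F, hF1, hF2, dense_tAlpha_iff.mp hF3⟩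
end

section
/- For an ideal I on ℕ containing all finite sets and an infinite A ⊆ ℕ, define D(A) ⊆ 𝕏 as the set consisting of ∅ together with all φ = ⋃_{i≤k}[s_i]×{m_i} such that A ∩ s_i^{-1}(0) ≠ ∅ for every i. If A ∈ I, then D(A) is closed and nowhere dense in 𝕏 with the topology ρ_I restricted to 𝕏; if A ∉ I, then D(A) is dense in 𝕏 with this topology. -/
open scoped Topology


/-- Points of the space `2^ℕ × ℕ`. -/
abbrev Pt : Type := (ℕ → Bool) × ℕ

/-- `𝕏`: the family of finite unions of basic clopen rectangles `[s] × {m}`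
(including `∅`), viewed inside the cube `2^(2^ℕ × ℕ)` as `Pt → Bool`.
A piece is coded by `(s, len, m)`: the rectangle `[s ↾ len] × {m}`. -/
def XX : Set (Pt → Bool) :=
  {θ | ∃ L : List ((ℕ → Bool) × ℕ × ℕ),
    ∀ p : Pt, θ p = true ↔ ∃ q ∈ L, p.2 = q.2.2 ∧ ∀ i < q.2.1, p.1 i = q.1 i}

/-- An ideal on ℕ containing all finite sets. -/
def IsIdeal (I : Set (Set ℕ)) : Prop :=
  (∀ A ∈ I, ∀ B, B ⊆ A → B ∈ I) ∧
  (∀ A ∈ I, ∀ B ∈ I, A ∪ B ∈ I) ∧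
  (∀ A : Set ℕ, A.Finite → A ∈ I)

/-- The topology `ρ_I` on the cube `2^(2^ℕ × ℕ)`, generated by the sets
`(α,p)⁺` and `(α,p)⁻` for `α` the characteristic function of a member of `I`. -/
def rho (I : Set (Set ℕ)) : TopologicalSpace (Pt → Bool) :=
  TopologicalSpace.generateFrom
    {S | ∃ A ∈ I, ∃ p : ℕ,
      S = {θ | θ (A.boolIndicator, p) = true} ∨ S = {θ | θ (A.boolIndicator, p) = false}}

/-- The subspace topology induced by `ρ_I` on a subset of the cube. -/
def subTop (S : Set (Pt → Bool)) (I : Set (Set ℕ)) : TopologicalSpace {θ // θ ∈ S} :=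
  TopologicalSpace.induced Subtype.val (rho I)

/-- `ψ_n = φ_n ∪ ({α : α(n) = 1} × ℕ)`, for an enumeration `φ` of `𝕏`. -/
def psi (φ : ℕ → Pt → Bool) (n : ℕ) : Pt → Bool := fun p => φ n p || p.1 n

/-- `𝕐 = {ψ_n : n ∈ ℕ}`. -/
def YY (φ : ℕ → Pt → Bool) : Set (Pt → Bool) := Set.range (psi φ)

/-- `K* = {F ⊆ ℕ : {φ_n : n ∈ F} is nowhere dense in 𝕏(K)}`. -/
def starIdeal (φ : ℕ → Pt → Bool) (K : Set (Set ℕ)) : Set (Set ℕ) :=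
  {F | @IsNowhereDense _ (subTop XX K) {θ : {θ // θ ∈ XX} | ∃ n ∈ F, φ n = θ.1}}

/-- `D(A)`: the elements of `𝕏` admitting a representation `⋃ᵢ [sᵢ] × {mᵢ}` in which every
piece satisfies `A ∩ sᵢ⁻¹(0) ≠ ∅` (together with `∅`, coded by the empty list). -/
def DD (A : Set ℕ) : Set (Pt → Bool) :=
  {θ | ∃ L : List ((ℕ → Bool) × ℕ × ℕ),
    (∀ p : Pt, θ p = true ↔ ∃ q ∈ L, p.2 = q.2.2 ∧ ∀ i < q.2.1, p.1 i = q.1 i) ∧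
    ∀ q ∈ L, ∃ i < q.2.1, q.1 i = false ∧ i ∈ A}

/-! ### Auxiliary material -/

open Classical in
/-- An index where two functions differ (if any). -/
noncomputable def dIdx (f g : ℕ → Bool) : ℕ :=
  if h : ∃ i, f i ≠ g i then h.choose else 0

lemma dIdx_spec {f g : ℕ → Bool} (h : f ≠ g) : f (dIdx f g) ≠ g (dIdx f g) := by
  have h' : ∃ i, f i ≠ g i := by
    by_contra hc
    push_neg at hc
    exact h (funext hc)
  unfold dIdx
  rw [dif_pos h']
  exact h'.choose_spec

lemma le_foldr_max {α : Type*} (f : α → ℕ) (l : List α) {x : α} (hx : x ∈ l) :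
    f x ≤ l.foldr (fun y n => max (f y) n) 0 := by
  induction l with
  | nil => simp at hx
  | cons a t ih =>
    rcases List.mem_cons.mp hx with rfl | h
    · exact le_max_left _ _
    · exact (ih h).trans (le_max_right _ _)

open Classical in
/-- Finite union of rectangles `[q.1 ↾ N] × {q.2}`. -/
noncomputable def build (l : List ((ℕ → Bool) × ℕ)) (N : ℕ) : Pt → Bool :=
  fun p => decide (∃ q ∈ l, p.2 = q.2 ∧ ∀ i < N, p.1 i = q.1 i)

lemma build_eq_true {l : List ((ℕ → Bool) × ℕ)} {N : ℕ} {p : Pt} :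
    build l N p = true ↔ ∃ q ∈ l, p.2 = q.2 ∧ ∀ i < N, p.1 i = q.1 i := by
  simp [build]

lemma build_rep (l : List ((ℕ → Bool) × ℕ)) (N : ℕ) :
    ∀ p : Pt, build l N p = true ↔
      ∃ q ∈ (l.map (fun q => (q.1, N, q.2)) : List ((ℕ → Bool) × ℕ × ℕ)),
        p.2 = q.2.2 ∧ ∀ i < q.2.1, p.1 i = q.1 i := by
  intro p
  rw [build_eq_true]
  constructor
  · rintro ⟨q, hq, h1, h2⟩
    exact ⟨(q.1, N, q.2), List.mem_map_of_mem hq, h1, h2⟩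
  · rintro ⟨q', hq', h1, h2⟩
    rcases List.mem_map.mp hq' with ⟨q, hq, rfl⟩
    exact ⟨q, hq, h1, h2⟩

lemma DD_subset {A : Set ℕ} {θ : Pt → Bool} (h : θ ∈ DD A) :
    ∀ p : Pt, (∀ i ∈ A, p.1 i = true) → θ p = false := by
  obtain ⟨L, hL, hD⟩ := h
  intro p hp
  by_contra hc
  rw [Bool.not_eq_false] at hc
  obtain ⟨q, hq, _, hmatch⟩ := (hL p).mp hc
  obtain ⟨i, hi, hfalse, hiA⟩ := hD q hq
  have := hmatch i hi
  rw [hp i hiA, hfalse] at this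
  simp at this

lemma mem_DD_of {A : Set ℕ} {θ : Pt → Bool} (hθ : θ ∈ XX)
    (h : ∀ p : Pt, (∀ i ∈ A, p.1 i = true) → θ p = false) : θ ∈ DD A := by
  obtain ⟨L, hL⟩ := hθ
  refine ⟨L, hL, ?_⟩
  intro q hq
  by_contra hc
  push_neg at hc
  set β : ℕ → Bool := fun i => if i < q.2.1 then q.1 i else true with hβ
  have hmem : θ (β, q.2.2) = true :=
    (hL (β, q.2.2)).mpr ⟨q, hq, rfl, fun i hi => by simp [β, hi]⟩
  have hA1 : ∀ i ∈ A, β i = true := by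
    intro i hiA
    by_cases hi : i < q.2.1
    · simp only [β, if_pos hi]
      rcases Bool.eq_false_or_eq_true (q.1 i) with ht | hf
      · exact ht
      · exact absurd hiA (hc i hi hf)
    · simp [β, hi]
  have := h (β, q.2.2) hA1
  rw [hmem] at this
  simp at this

/-- The subbasis generating `ρ_I`. -/
def SBs (I : Set (Set ℕ)) : Set (Set (Pt → Bool)) :=
  {S | ∃ A ∈ I, ∃ p : ℕ,
    S = {θ | θ (A.boolIndicator, p) = true} ∨ S = {θ | θ (A.boolIndicator, p) = false}}

/-- The set coded by a triple `(B, p, b)`. -/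
def cset (c : Set ℕ × ℕ × Bool) : Set (Pt → Bool) :=
  {θ | θ (c.1.boolIndicator, c.2.1) = c.2.2}

lemma sdata_exists {I : Set (Set ℕ)} {S : Set (Pt → Bool)} (h : S ∈ SBs I) :
    ∃ c : Set ℕ × ℕ × Bool, c.1 ∈ I ∧ S = cset c := by
  obtain ⟨B, hB, p, hp | hp⟩ := h
  · exact ⟨(B, p, true), hB, hp⟩
  · exact ⟨(B, p, false), hB, hp⟩

lemma exists_datalist {I : Set (Set ℕ)} {T : Set (Set (Pt → Bool))} (hT : T.Finite)
    (hsub : T ⊆ SBs I) :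
    ∃ cl : List (Set ℕ × ℕ × Bool),
      (∀ c ∈ cl, c.1 ∈ I) ∧ (∀ S ∈ T, ∃ c ∈ cl, S = cset c) ∧ (∀ c ∈ cl, cset c ∈ T) := by
  classical
  have hmemT : ∀ x : {S // S ∈ hT.toFinset.toList}, x.1 ∈ T := fun x =>
    hT.mem_toFinset.mp (Finset.mem_toList.mp x.2)
  refine ⟨hT.toFinset.toList.attach.map
    (fun x => (sdata_exists (hsub (hmemT x))).choose), ?_, ?_, ?_⟩
  · intro c hc
    rcases List.mem_map.mp hc with ⟨x, _, rfl⟩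
    exact (sdata_exists (hsub (hmemT x))).choose_spec.1
  · intro S hS
    have hS' : S ∈ hT.toFinset.toList := Finset.mem_toList.mpr (hT.mem_toFinset.mpr hS)
    exact ⟨_, List.mem_map_of_mem (List.mem_attach _ ⟨S, hS'⟩),
      (sdata_exists (hsub (hmemT ⟨S, hS'⟩))).choose_spec.2⟩
  · intro c hc
    rcases List.mem_map.mp hc with ⟨x, _, rfl⟩
    have h2 := (sdata_exists (hsub (hmemT x))).choose_spec.2
    rw [← h2]
    exact hmemT x

lemma key {I : Set (Set ℕ)} (hI : IsIdeal I) (A : Set ℕ)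
    {T : Set (Set (Pt → Bool))} (hT : T.Finite) (hTsub : T ⊆ SBs I)
    {θ₀ : Pt → Bool} (h₀ : θ₀ ∈ ⋂₀ T) :
    (A ∉ I → ∃ θ, θ ∈ XX ∧ θ ∈ DD A ∧ θ ∈ ⋂₀ T) ∧
    (∃ θ, θ ∈ XX ∧ θ ∉ DD A ∧ θ ∈ ⋂₀ T) := by
  classical
  obtain ⟨cl, hclI, hrep, hmemT⟩ := exists_datalist hT hTsub
  have h0c : ∀ c ∈ cl, θ₀ (c.1.boolIndicator, c.2.1) = c.2.2 := fun c hc =>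
    h₀ _ (hmemT c hc)
  set NN : ℕ := cl.foldr (fun c n =>
      max (cl.foldr (fun c' n' => max (dIdx c.1.boolIndicator c'.1.boolIndicator) n') 0) n) 0
    with hNNdef
  have hNNb : ∀ c ∈ cl, ∀ c' ∈ cl, dIdx c.1.boolIndicator c'.1.boolIndicator ≤ NN := by
    intro c hc c' hc'
    calc dIdx c.1.boolIndicator c'.1.boolIndicator
        ≤ cl.foldr (fun c' n' => max (dIdx c.1.boolIndicator c'.1.boolIndicator) n') 0 :=
          le_foldr_max (fun c' => dIdx c.1.boolIndicator c'.1.boolIndicator) cl hc'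
      _ ≤ NN :=
          le_foldr_max
            (fun c => cl.foldr (fun c' n' => max (dIdx c.1.boolIndicator c'.1.boolIndicator) n') 0)
            cl hc
  have hsep : ∀ N', NN < N' → ∀ c ∈ cl, ∀ c' ∈ cl, c.2.2 = false → c'.2.2 = true →
      c.2.1 = c'.2.1 → ¬(∀ i < N', c.1.boolIndicator i = c'.1.boolIndicator i) := by
    intro N' hN' c hc c' hc' hb hb' hp hall
    by_cases heq : c.1.boolIndicator = c'.1.boolIndicator
    · have h1 := h0c c hc
      have h2 := h0c c' hc'
      rw [heq, hp, h2, hb'] at h1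
      rw [hb] at h1
      simp at h1
    · exact dIdx_spec heq (hall _ (lt_of_le_of_lt (hNNb c hc c' hc') hN'))
  have hconstraints : ∀ (pts : List ((ℕ → Bool) × ℕ)) (N : ℕ), NN < N →
      (∀ c ∈ cl, c.2.2 = true → (c.1.boolIndicator, c.2.1) ∈ pts) →
      (∀ q ∈ pts, ∀ c ∈ cl, c.2.2 = false → ¬(c.2.1 = q.2 ∧ ∀ i < N, c.1.boolIndicator i = q.1 i)) →
      build pts N ∈ ⋂₀ T := by
    intro pts N hN htrue hfalse
    refine Set.mem_sInter.mpr fun S hS => ?_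
    obtain ⟨c, hc, rfl⟩ := hrep S hS
    show build pts N (c.1.boolIndicator, c.2.1) = c.2.2
    rcases Bool.eq_false_or_eq_true c.2.2 with hb | hb
    · rw [hb, build_eq_true]
      exact ⟨(c.1.boolIndicator, c.2.1), htrue c hc hb, rfl, fun i _ => rfl⟩
    · rw [hb, ← Bool.not_eq_true, build_eq_true]
      rintro ⟨q, hq, hpq, hall⟩
      exact hfalse q hq c hc hb ⟨hpq, hall⟩
  constructor
  · -- dense part : A ∉ I
    intro hAI
    have hfold : ∀ l : List (Set ℕ × ℕ × Bool), (∀ c ∈ l, c.1 ∈ I) →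
        l.foldr (fun c u => c.1 ∪ u) ∅ ∈ I ∧
          ∀ c ∈ l, c.1 ⊆ l.foldr (fun c u => c.1 ∪ u) ∅ := by
      intro l
      induction l with
      | nil => exact fun _ => ⟨hI.2.2 ∅ Set.finite_empty, by simp⟩
      | cons a t ih =>
        intro h
        obtain ⟨h1, h2⟩ := ih (fun c hc => h c (List.mem_cons_of_mem _ hc))
        refine ⟨hI.2.1 _ (h a (List.mem_cons_self)) _ h1, ?_⟩
        intro c hc
        rcases List.mem_cons.mp hc with rfl | hc
        · exact Set.subset_union_left
        · exact (h2 c hc).trans Set.subset_union_right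
    obtain ⟨hUI, hUsub⟩ := hfold cl hclI
    have hAnotsub : ¬ A ⊆ cl.foldr (fun c u => c.1 ∪ u) ∅ := fun h => hAI (hI.1 _ hUI A h)
    obtain ⟨a, haA, haU⟩ := Set.not_subset.mp hAnotsub
    have haC : ∀ c ∈ cl, a ∉ c.1 := fun c hc h => haU (hUsub c hc h)
    set N := max NN a + 1 with hN
    have hNNlt : NN < N := lt_of_le_of_lt (le_max_left _ _) (Nat.lt_succ_self _)
    have haN : a < N := lt_of_le_of_lt (le_max_right _ _) (Nat.lt_succ_self _)
    set pts := (cl.filter (fun c => c.2.2)).map (fun c => (c.1.boolIndicator, c.2.1)) with hpts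
    refine ⟨build pts N, ⟨_, build_rep pts N⟩, ⟨_, build_rep pts N, ?_⟩, ?_⟩
    · intro q hq
      rcases List.mem_map.mp hq with ⟨q', hq', rfl⟩
      rcases List.mem_map.mp hq' with ⟨c, hc, rfl⟩
      have hcCl : c ∈ cl := List.mem_of_mem_filter hc
      exact ⟨a, haN, (Set.notMem_iff_boolIndicator _ _).mp (haC c hcCl), haA⟩
    · refine hconstraints pts N hNNlt ?_ ?_
      · intro c hc hb
        exact List.mem_map_of_mem (List.mem_filter.mpr ⟨hc, by simp [hb]⟩)
      · rintro q hq c hc hb ⟨hpq, hall⟩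
        rcases List.mem_map.mp hq with ⟨c', hc', rfl⟩
        have hc'T : c'.2.2 = true := by simpa using (List.mem_filter.mp hc').2
        have hc'cl : c' ∈ cl := List.mem_of_mem_filter hc'
        exact hsep N hNNlt c hc c' hc'cl hb hc'T hpq hall
  · -- nowhere dense part
    set mTop := cl.foldr (fun c n => max (c.2.1 + 1) n) 0 with hmdef
    have hmlt : ∀ c ∈ cl, c.2.1 < mTop := fun c hc =>
      lt_of_lt_of_le (Nat.lt_succ_self _) (le_foldr_max (fun c => c.2.1 + 1) cl hc)
    set N := NN + 1 with hN
    set pts := (A.boolIndicator, mTop) ::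
      (cl.filter (fun c => c.2.2)).map (fun c => (c.1.boolIndicator, c.2.1)) with hpts
    refine ⟨build pts N, ⟨_, build_rep pts N⟩, ?_, ?_⟩
    · intro hDD
      set β : ℕ → Bool := fun i => if i < N then A.boolIndicator i else true with hβ
      have hβA : ∀ i ∈ A, β i = true := by
        intro i hi
        by_cases h : i < N
        · simpa [β, h] using (Set.mem_iff_boolIndicator A i).mp hi
        · simp [β, h]
      have htrue : build pts N (β, mTop) = true := by
        rw [build_eq_true]
        exact ⟨(A.boolIndicator, mTop), List.mem_cons_self, rfl, fun i hi => by simp [β, hi]⟩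
      have := DD_subset hDD (β, mTop) hβA
      rw [htrue] at this
      simp at this
    · refine hconstraints pts N (Nat.lt_succ_self _) ?_ ?_
      · intro c hc hb
        exact List.mem_cons_of_mem _
          (List.mem_map_of_mem (List.mem_filter.mpr ⟨hc, by simp [hb]⟩))
      · rintro q hq c hc hb ⟨hpq, hall⟩
        rcases List.mem_cons.mp hq with rfl | hq
        · exact absurd hpq (Nat.ne_of_lt (hmlt c hc))
        · rcases List.mem_map.mp hq with ⟨c', hc', rfl⟩
          have hc'T : c'.2.2 = true := by simpa using (List.mem_filter.mp hc').2
          have hc'cl : c' ∈ cl := List.mem_of_mem_filter hc'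
          exact hsep N (Nat.lt_succ_self _) c hc c' hc'cl hb hc'T hpq hall

lemma dense_of_key {I : Set (Set ℕ)} (P : (Pt → Bool) → Prop)
    (h : ∀ (T : Set (Set (Pt → Bool))), T.Finite → T ⊆ SBs I → ∀ θ₀ ∈ ⋂₀ T,
      ∃ θ, θ ∈ XX ∧ P θ ∧ θ ∈ ⋂₀ T) :
    @Dense _ (subTop XX I) {θ : {θ // θ ∈ XX} | P θ.1} := by
  letI : TopologicalSpace {θ // θ ∈ XX} := subTop XX I
  rw [dense_iff_inter_open]
  rintro U hU ⟨θ₀, hθ₀U⟩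
  obtain ⟨V, hV, rfl⟩ := (@isOpen_induced_iff _ _ (rho I) U Subtype.val).mp hU
  have hbasis := @TopologicalSpace.isTopologicalBasis_of_subbasis _ (rho I) (SBs I) rfl
  obtain ⟨W, hW, hθ₀W, hWV⟩ :=
    @TopologicalSpace.IsTopologicalBasis.exists_subset_of_mem_open _ (rho I) _ hbasis _ _ hθ₀U hV
  obtain ⟨T, ⟨hTfin, hTsub⟩, rfl⟩ := hW
  obtain ⟨θ, hθXX, hθP, hθT⟩ := h T hTfin hTsub θ₀.1 hθ₀W
  exact ⟨⟨θ, hθXX⟩, hWV hθT, hθP⟩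

/-- If `A ∈ I` then `D(A)` is closed and nowhere dense in `𝕏(I)`; if `A ∉ I` then `D(A)`
is dense in `𝕏(I)`. -/
theorem DD_closed_nwd_or_dense (I : Set (Set ℕ)) (hI : IsIdeal I)
    (A : Set ℕ) (hA : A.Infinite) :
    (A ∈ I → @IsClosed _ (subTop XX I) {θ : {θ // θ ∈ XX} | θ.1 ∈ DD A} ∧
      @IsNowhereDense _ (subTop XX I) {θ : {θ // θ ∈ XX} | θ.1 ∈ DD A}) ∧
    (A ∉ I → @Dense _ (subTop XX I) {θ : {θ // θ ∈ XX} | θ.1 ∈ DD A}) := by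
  classical
  letI : TopologicalSpace {θ // θ ∈ XX} := subTop XX I
  constructor
  · intro hAI
    have hclosed : IsClosed {θ : {θ // θ ∈ XX} | θ.1 ∈ DD A} := by
      rw [← isOpen_compl_iff]
      have hUeq : {θ : {θ // θ ∈ XX} | θ.1 ∈ DD A}ᶜ =
          Subtype.val ⁻¹' (⋃₀ {S | ∃ B ∈ I, A ⊆ B ∧ ∃ m : ℕ,
            S = {θ : Pt → Bool | θ (B.boolIndicator, m) = true}}) := by
        ext ⟨θ, hθ⟩
        simp only [Set.mem_compl_iff, Set.mem_setOf_eq, Set.mem_preimage, Set.mem_sUnion]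
        constructor
        · intro hnD
          have hw : ¬ ∀ p : Pt, (∀ i ∈ A, p.1 i = true) → θ p = false :=
            fun h => hnD (mem_DD_of hθ h)
          push_neg at hw
          obtain ⟨p, hp1, hp2⟩ := hw
          have hp2' : θ p = true := by revert hp2; cases θ p <;> simp
          clear hp2
          obtain ⟨L, hL⟩ := hθ
          obtain ⟨q, hq, hm, hmatch⟩ := (hL p).mp hp2'
          refine ⟨_, ⟨A ∪ {i | i < q.2.1 ∧ q.1 i = true},
            hI.2.1 A hAI _ (hI.2.2 _ ((Set.finite_Iio q.2.1).subset fun i hi => hi.1)),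
            Set.subset_union_left, p.2, rfl⟩, ?_⟩
          show θ ((A ∪ {i | i < q.2.1 ∧ q.1 i = true}).boolIndicator, p.2) = true
          rw [hL]
          refine ⟨q, hq, hm, ?_⟩
          intro i hi
          rcases Bool.eq_false_or_eq_true (q.1 i) with ht | hf
          · rw [ht, ← Set.mem_iff_boolIndicator]
            exact Or.inr ⟨hi, ht⟩
          · rw [hf, ← Set.notMem_iff_boolIndicator]
            rintro (hiA | ⟨-, hit⟩)
            · have := hmatch i hi
              rw [hp1 i hiA, hf] at this
              simp at this
            · rw [hf] at hit; simp at hit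
        · rintro ⟨S, ⟨B, hBI, hAB, m, rfl⟩, hθS⟩ hD
          have hf := DD_subset hD (B.boolIndicator, m)
            (fun i hi => (Set.mem_iff_boolIndicator B i).mp (hAB hi))
          have hS' : θ (B.boolIndicator, m) = true := hθS
          rw [hS'] at hf
          simp at hf
      have hUopen : IsOpen[rho I] (⋃₀ {S | ∃ B ∈ I, A ⊆ B ∧ ∃ m : ℕ,
          S = {θ : Pt → Bool | θ (B.boolIndicator, m) = true}}) := by
        refine @isOpen_sUnion _ (rho I) _ ?_
        rintro S ⟨B, hBI, hAB, m, rfl⟩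
        exact @TopologicalSpace.isOpen_generateFrom_of_mem _ _ _ ⟨B, hBI, m, Or.inl rfl⟩
      rw [hUeq]
      exact (@isOpen_induced_iff _ _ (rho I) _ Subtype.val).mpr ⟨_, hUopen, rfl⟩
    refine ⟨hclosed, ?_⟩
    show interior (closure {θ : {θ // θ ∈ XX} | θ.1 ∈ DD A}) = ∅
    rw [hclosed.closure_eq, interior_eq_empty_iff_dense_compl]
    have : {θ : {θ // θ ∈ XX} | θ.1 ∈ DD A}ᶜ = {θ : {θ // θ ∈ XX} | ¬ θ.1 ∈ DD A} := rfl
    rw [this]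
    exact dense_of_key (fun θ => ¬ θ ∈ DD A)
      (fun T hTfin hTsub θ₀ h₀ => (key hI A hTfin hTsub h₀).2)
  · intro hAI
    exact dense_of_key (fun θ => θ ∈ DD A)
      (fun T hTfin hTsub θ₀ h₀ => (key hI A hTfin hTsub h₀).1 hAI)
end

section
/- Let I be an ideal on ℕ that is not p⁺, i.e., there is a decreasing sequence (A_n) of I-positive sets with no I-positive pseudo-intersection. Then 𝕏(I) is not wSS: there exists a sequence (D_n) of dense subsets of 𝕏(I) such that for any choice of finite sets K_n ⊆ D_n, the union ⋃_n K_n is nowhere dense in 𝕏(I). -/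
/-! ### Auxiliary machinery -/

/-- Build an element of `𝕏` from a list of rectangle codes. -/
def xxMk (L : List ((ℕ → Bool) × ℕ × ℕ)) : Pt → Bool :=
  fun pt => L.any fun q => decide (pt.2 = q.2.2) && decide (∀ i < q.2.1, pt.1 i = q.1 i)

lemma xxMk_eq_true (L : List ((ℕ → Bool) × ℕ × ℕ)) (pt : Pt) :
    xxMk L pt = true ↔ ∃ q ∈ L, pt.2 = q.2.2 ∧ ∀ i < q.2.1, pt.1 i = q.1 i := by
  simp [xxMk, List.any_eq_true]

lemma xxMk_mem_XX (L : List ((ℕ → Bool) × ℕ × ℕ)) : xxMk L ∈ XX :=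
  ⟨L, fun p => xxMk_eq_true L p⟩

/-- All boolean strings of length `n` (coded as functions that are `false` from `n` on). -/
def allStrings : ℕ → List (ℕ → Bool)
  | 0 => [fun _ => false]
  | n + 1 => (allStrings n).flatMap fun s =>
      [fun i => if i = n then false else s i, fun i => if i = n then true else s i]

lemma allStrings_cover (n : ℕ) (α : ℕ → Bool) :
    ∃ s ∈ allStrings n, ∀ i < n, s i = α i := by
  induction n with
  | zero =>
    refine ⟨fun _ => false, ?_, ?_⟩
    · simp [allStrings]
    · intro i hi; exact absurd hi (Nat.not_lt_zero i)
  | succ n ih =>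
    obtain ⟨s, hs, hmatch⟩ := ih
    cases hα : α n with
    | false =>
      refine ⟨fun i => if i = n then false else s i, ?_, ?_⟩
      · exact List.mem_flatMap.2 ⟨s, hs, by simp⟩
      · intro i hi
        by_cases hin : i = n
        · subst hin; simp [hα]
        · have : i < n := lt_of_le_of_ne (Nat.lt_succ_iff.1 hi) hin
          simp [hin, hmatch i this]
    | true =>
      refine ⟨fun i => if i = n then true else s i, ?_, ?_⟩
      · exact List.mem_flatMap.2 ⟨s, hs, by simp⟩
      · intro i hi
        by_cases hin : i = n
        · subst hin; simp [hα]
        · have : i < n := lt_of_le_of_ne (Nat.lt_succ_iff.1 hi) hin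
          simp [hin, hmatch i this]

open Classical in
/-- First index where two boolean sequences differ (0 if equal). -/
noncomputable def diffIdx (f g : ℕ → Bool) : ℕ :=
  if h : ∃ i, f i ≠ g i then Nat.find h else 0

lemma diffIdx_spec {f g : ℕ → Bool} (h : f ≠ g) :
    f (diffIdx f g) ≠ g (diffIdx f g) := by
  have h' : ∃ i, f i ≠ g i := by
    by_contra hc
    push_neg at hc
    exact h (funext fun i => hc i)
  unfold diffIdx
  rw [dif_pos h']
  exact Nat.find_spec h'

lemma boolIndicator_ne_of_ne {A B : Set ℕ} (h : A ≠ B) :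
    A.boolIndicator ≠ B.boolIndicator := by
  intro he
  apply h
  ext k
  rw [Set.mem_iff_boolIndicator, Set.mem_iff_boolIndicator, he]

/-- Finite "cells": basic open sets given by a list of conditions `(A, p, b)`. -/
def cellSet (c : List (Set ℕ × ℕ × Bool)) : Set (Pt → Bool) :=
  {θ | ∀ x ∈ c, θ (x.1.boolIndicator, x.2.1) = x.2.2}

/-- The generators of `ρ_I`. -/
def rhoGens (I : Set (Set ℕ)) : Set (Set (Pt → Bool)) :=
  {S | ∃ A ∈ I, ∃ p : ℕ,
      S = {θ | θ (A.boolIndicator, p) = true} ∨ S = {θ | θ (A.boolIndicator, p) = false}}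

lemma cellSet_nil : cellSet [] = Set.univ := by
  ext θ; simp [cellSet]

lemma cellSet_cons (x : Set ℕ × ℕ × Bool) (c : List (Set ℕ × ℕ × Bool)) :
    cellSet (x :: c)
      = {θ : Pt → Bool | θ (x.1.boolIndicator, x.2.1) = x.2.2} ∩ cellSet c := by
  ext θ
  simp [cellSet, List.forall_mem_cons]

lemma cellSet_generateOpen (I : Set (Set ℕ)) (c : List (Set ℕ × ℕ × Bool))
    (hc : ∀ x ∈ c, x.1 ∈ I) :
    TopologicalSpace.GenerateOpen (rhoGens I) (cellSet c) := by
  induction c with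
  | nil =>
    rw [cellSet_nil]
    exact TopologicalSpace.GenerateOpen.univ
  | cons x c ih =>
    rw [cellSet_cons]
    refine TopologicalSpace.GenerateOpen.inter _ _ ?_
      (ih fun y hy => hc y (List.mem_cons_of_mem _ hy))
    refine TopologicalSpace.GenerateOpen.basic _ ?_
    refine ⟨x.1, hc x (List.mem_cons_self), x.2.1, ?_⟩
    cases hb : x.2.2 with
    | true => left; rw [← hb]
    | false => right; rw [← hb]

lemma cell_extract (I : Set (Set ℕ)) {V : Set (Pt → Bool)}
    (hV : TopologicalSpace.GenerateOpen (rhoGens I) V) :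
    ∀ θ₀ ∈ V, ∃ c : List (Set ℕ × ℕ × Bool),
      (∀ x ∈ c, x.1 ∈ I) ∧ θ₀ ∈ cellSet c ∧ cellSet c ⊆ V := by
  induction hV with
  | basic S hS =>
    intro θ₀ hθ₀
    obtain ⟨A, hA, p, hS⟩ := hS
    cases hS with
    | inl h =>
      refine ⟨[(A, p, true)], ?_, ?_, ?_⟩
      · intro x hx; rcases List.mem_singleton.1 hx with rfl; exact hA
      · intro x hx; rcases List.mem_singleton.1 hx with rfl
        have : θ₀ ∈ {θ : Pt → Bool | θ (A.boolIndicator, p) = true} := h ▸ hθ₀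
        exact this
      · intro θ hθ
        rw [h]
        exact hθ (A, p, true) (List.mem_singleton_self _)
    | inr h =>
      refine ⟨[(A, p, false)], ?_, ?_, ?_⟩
      · intro x hx; rcases List.mem_singleton.1 hx with rfl; exact hA
      · intro x hx; rcases List.mem_singleton.1 hx with rfl
        have : θ₀ ∈ {θ : Pt → Bool | θ (A.boolIndicator, p) = false} := h ▸ hθ₀
        exact this
      · intro θ hθ
        rw [h]
        exact hθ (A, p, false) (List.mem_singleton_self _)
  | univ =>
    intro θ₀ _
    refine ⟨[], ?_, ?_, ?_⟩
    · intro x hx; cases hx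
    · intro x hx; cases hx
    · intro θ _; trivial
  | inter s t _ _ ihs iht =>
    intro θ₀ hθ₀
    obtain ⟨c₁, h₁, m₁, s₁⟩ := ihs θ₀ hθ₀.1
    obtain ⟨c₂, h₂, m₂, s₂⟩ := iht θ₀ hθ₀.2
    refine ⟨c₁ ++ c₂, ?_, ?_, ?_⟩
    · intro x hx
      rcases List.mem_append.1 hx with hx | hx
      · exact h₁ x hx
      · exact h₂ x hx
    · intro x hx
      rcases List.mem_append.1 hx with hx | hx
      · exact m₁ x hx
      · exact m₂ x hx
    · intro θ hθ
      exact ⟨s₁ fun x hx => hθ x (List.mem_append.2 (Or.inl hx)),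
             s₂ fun x hx => hθ x (List.mem_append.2 (Or.inr hx))⟩
  | sUnion S _ ih =>
    intro θ₀ hθ₀
    obtain ⟨t, htS, hθt⟩ := hθ₀
    obtain ⟨c, h, m, sub⟩ := ih t htS θ₀ hθt
    exact ⟨c, h, m, sub.trans (Set.subset_sUnion_of_mem htS)⟩

lemma le_foldr_max_s14 (l : List ℕ) : ∀ a ∈ l, a ≤ l.foldr max 0 := by
  induction l with
  | nil => simp
  | cons x l ih =>
    intro a ha
    rcases List.mem_cons.1 ha with rfl | h
    · exact le_max_left _ _
    · exact le_trans (ih a h) (le_max_right _ _)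

/-- The union of all "negative" sets appearing in a cell. -/
def outU (c : List (Set ℕ × ℕ × Bool)) : Set ℕ :=
  c.foldr (fun x s => (if x.2.2 = false then x.1 else ∅) ∪ s) ∅

lemma outU_cons (x : Set ℕ × ℕ × Bool) (c : List (Set ℕ × ℕ × Bool)) :
    outU (x :: c) = (if x.2.2 = false then x.1 else ∅) ∪ outU c := rfl

lemma outU_mem {I : Set (Set ℕ)} (hI : IsIdeal I) (c : List (Set ℕ × ℕ × Bool))
    (hc : ∀ x ∈ c, x.1 ∈ I) : outU c ∈ I := by
  induction c with
  | nil => exact hI.2.2 ∅ Set.finite_empty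
  | cons x c ih =>
    rw [outU_cons]
    refine hI.2.1 _ ?_ _ (ih fun y hy => hc y (List.mem_cons_of_mem _ hy))
    by_cases hb : x.2.2 = false
    · rw [if_pos hb]; exact hc x (List.mem_cons_self)
    · rw [if_neg hb]; exact hI.2.2 ∅ Set.finite_empty

lemma subset_outU (c : List (Set ℕ × ℕ × Bool)) :
    ∀ x ∈ c, x.2.2 = false → x.1 ⊆ outU c := by
  induction c with
  | nil => intro x hx; cases hx
  | cons y c ih =>
    intro x hx hb
    rcases List.mem_cons.1 hx with rfl | h
    · rw [outU_cons, if_pos hb]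
      exact Set.subset_union_left
    · rw [outU_cons]
      exact (ih x h hb).trans Set.subset_union_right

/-- If `I` is not p⁺, then `𝕏(I)` is not wSS: there is a sequence of dense sets such that
every choice of finite subsets has nowhere dense union. -/
theorem XX_not_wSS_of_not_pplus (I : Set (Set ℕ)) (hI : IsIdeal I)
    (hnp : ∃ A : ℕ → Set ℕ, (∀ n, A (n + 1) ⊆ A n) ∧ (∀ n, A n ∉ I) ∧
      ∀ B : Set ℕ, B ∉ I → ∃ n, ¬ (B \ A n).Finite) :
    ∃ D : ℕ → Set {θ // θ ∈ XX}, (∀ n, @Dense _ (subTop XX I) (D n)) ∧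
      ∀ K : ℕ → Set {θ // θ ∈ XX}, (∀ n, K n ⊆ D n) → (∀ n, (K n).Finite) →
        @IsNowhereDense _ (subTop XX I) (⋃ n, K n) := by
  classical
  obtain ⟨A, hdec, hpos, hps⟩ := hnp
  have hmono : ∀ {n m : ℕ}, n ≤ m → A m ⊆ A n := by
    intro n m h
    induction h with
    | refl => exact subset_rfl
    | step _ ih => exact fun k hk => ih (hdec _ hk)
  letI tX : TopologicalSpace {θ // θ ∈ XX} := subTop XX I
  refine ⟨fun n => {θ : {θ // θ ∈ XX} | ∀ p : ℕ, (∃ α, θ.1 (α, p) = true) →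
      ∃ w, ∀ α : ℕ → Bool, α w = (A n).boolIndicator w → θ.1 (α, p) = true}, ?_, ?_⟩
  · -- Density
    intro n
    rw [dense_iff_inter_open]
    rintro U hU ⟨⟨θ₀, hθ₀X⟩, hθ₀U⟩
    obtain ⟨V, hVopen, hVU⟩ := (@isOpen_induced_iff _ _ (rho I) U Subtype.val).1 hU
    have hθ₀V : θ₀ ∈ V := by
      rw [← hVU] at hθ₀U
      exact hθ₀U
    have hGen : TopologicalSpace.GenerateOpen (rhoGens I) V := hVopen
    obtain ⟨c, hcI, hθ₀c, hcV⟩ := cell_extract I hGen θ₀ hθ₀V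
    -- choose a "test position" w ∈ A n avoiding all negative sets of the cell
    have hnsub : ¬ A n ⊆ outU c := fun hsub => hpos n (hI.1 _ (outU_mem hI c hcI) _ hsub)
    obtain ⟨w, hwA, hwO⟩ := Set.not_subset.1 hnsub
    -- choose the resolution L separating positive from negative conditions
    set L : ℕ :=
      (c.flatMap fun x => c.map fun y => diffIdx x.1.boolIndicator y.1.boolIndicator).foldr max 0 + 1
      with hLdef
    have hLlt : ∀ x ∈ c, ∀ y ∈ c,
        diffIdx x.1.boolIndicator y.1.boolIndicator < L := by
      intro x hx y hy
      have hmem : diffIdx x.1.boolIndicator y.1.boolIndicator ∈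
          c.flatMap fun x => c.map fun y => diffIdx x.1.boolIndicator y.1.boolIndicator :=
        List.mem_flatMap.2 ⟨x, hx, List.mem_map.2 ⟨y, hy, rfl⟩⟩
      exact Nat.lt_succ_of_le (le_foldr_max_s14 _ _ hmem)
    -- the big list: rectangles around positive conditions plus halfspaces at their columns
    set big : List ((ℕ → Bool) × ℕ × ℕ) :=
      (c.filterMap fun x =>
        if x.2.2 = true then some (x.1.boolIndicator, L, x.2.1) else none) ++
      (c.flatMap fun x =>
        if x.2.2 = true then
          (allStrings w).map fun s =>
            (fun i => if i = w then (A n).boolIndicator w else s i, w + 1, x.2.1)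
        else []) with hbigdef
    have hbig : ∀ r, r ∈ big ↔
        ((∃ x ∈ c, x.2.2 = true ∧ r = (x.1.boolIndicator, L, x.2.1)) ∨
         (∃ x ∈ c, x.2.2 = true ∧ ∃ s ∈ allStrings w,
            r = (fun i => if i = w then (A n).boolIndicator w else s i, w + 1, x.2.1))) := by
      intro r
      rw [hbigdef, List.mem_append]
      constructor
      · rintro (hr | hr)
        · obtain ⟨x, hx, hfx⟩ := List.mem_filterMap.1 hr
          by_cases hb : x.2.2 = true
          · rw [if_pos hb] at hfx
            exact Or.inl ⟨x, hx, hb, (Option.some_inj.1 hfx).symm⟩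
          · rw [if_neg hb] at hfx; cases hfx
        · obtain ⟨x, hx, hfx⟩ := List.mem_flatMap.1 hr
          by_cases hb : x.2.2 = true
          · rw [if_pos hb] at hfx
            obtain ⟨s, hs, hsr⟩ := List.mem_map.1 hfx
            exact Or.inr ⟨x, hx, hb, s, hs, hsr.symm⟩
          · rw [if_neg hb] at hfx; cases hfx
      · rintro (⟨x, hx, hb, rfl⟩ | ⟨x, hx, hb, s, hs, rfl⟩)
        · exact Or.inl (List.mem_filterMap.2 ⟨x, hx, by rw [if_pos hb]⟩)
        · exact Or.inr (List.mem_flatMap.2 ⟨x, hx, by rw [if_pos hb]; exact List.mem_map.2 ⟨s, hs, rfl⟩⟩)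
    set θ₁ : Pt → Bool := xxMk big with hθ₁def
    have hθ₁X : θ₁ ∈ XX := xxMk_mem_XX big
    -- θ₁ satisfies the cell
    have hθ₁c : θ₁ ∈ cellSet c := by
      intro x hx
      cases hb : x.2.2 with
      | true =>
        rw [hθ₁def]
        rw [xxMk_eq_true]
        exact ⟨(x.1.boolIndicator, L, x.2.1), (hbig _).2 (Or.inl ⟨x, hx, hb, rfl⟩), rfl,
          fun i _ => rfl⟩
      | false =>
        rw [hθ₁def]
        rw [Bool.eq_false_iff]
        intro htr
        rw [xxMk_eq_true] at htr
        obtain ⟨r, hr, hcol, hmatch⟩ := htr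
        rcases (hbig r).1 hr with ⟨y, hy, hyb, rfl⟩ | ⟨y, hy, hyb, s, hs, rfl⟩
        · -- a positive rectangle cannot contain a negative point
          have hcol' : x.2.1 = y.2.1 := hcol
          have hne : x.1.boolIndicator ≠ y.1.boolIndicator := by
            intro he
            have h1 : θ₀ (y.1.boolIndicator, y.2.1) = true := by
              have h' := hθ₀c y hy
              rw [hyb] at h'
              exact h'
            have h2 : θ₀ (x.1.boolIndicator, x.2.1) = false := by
              have h' := hθ₀c x hx
              rw [hb] at h'
              exact h'
            rw [he, hcol', h1] at h2
            cases h2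
          have hd := diffIdx_spec hne
          exact hd (hmatch _ (hLlt x hx y hy))
        · -- a halfspace cannot contain a negative point, by choice of w
          have hw1 : x.1.boolIndicator w = (A n).boolIndicator w := by
            have := hmatch w (Nat.lt_succ_self w)
            simpa using this
          have hwAn : (A n).boolIndicator w = true := (Set.mem_iff_boolIndicator _ _).1 hwA
          have hwx : w ∈ x.1 := (Set.mem_iff_boolIndicator _ _).2 (by rw [hw1, hwAn])
          exact hwO (subset_outU c x hx hb hwx)
    have hθ₁V : θ₁ ∈ V := hcV hθ₁c
    -- θ₁ is in D n
    have hθ₁D : ∀ p : ℕ, (∃ α, θ₁ (α, p) = true) →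
        ∃ w', ∀ α : ℕ → Bool, α w' = (A n).boolIndicator w' → θ₁ (α, p) = true := by
      intro p hne
      obtain ⟨α₀, hα₀⟩ := hne
      rw [hθ₁def, xxMk_eq_true] at hα₀
      obtain ⟨r, hr, hcol, _⟩ := hα₀
      have hxcol : ∃ x ∈ c, x.2.2 = true ∧ x.2.1 = p := by
        rcases (hbig r).1 hr with ⟨y, hy, hyb, rfl⟩ | ⟨y, hy, hyb, s, hs, rfl⟩
        · exact ⟨y, hy, hyb, hcol.symm⟩
        · exact ⟨y, hy, hyb, hcol.symm⟩
      obtain ⟨x, hx, hxb, hxp⟩ := hxcol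
      refine ⟨w, ?_⟩
      intro α hα
      obtain ⟨s, hs, hmatch⟩ := allStrings_cover w α
      rw [hθ₁def, xxMk_eq_true]
      refine ⟨(fun i => if i = w then (A n).boolIndicator w else s i, w + 1, x.2.1),
        (hbig _).2 (Or.inr ⟨x, hx, hxb, s, hs, rfl⟩), hxp.symm, ?_⟩
      intro i hi
      by_cases hiw : i = w
      · subst hiw; simp [hα]
      · have hilt : i < w := lt_of_le_of_ne (Nat.lt_succ_iff.1 hi) hiw
        simp [hiw, hmatch i hilt]
    refine ⟨⟨θ₁, hθ₁X⟩, ?_, ?_⟩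
    · rw [← hVU]
      exact hθ₁V
    · exact hθ₁D
  · -- Nowhere density of selections
    intro K hKD hKfin
    show interior (closure (⋃ n, K n)) = ∅
    by_contra hne
    obtain ⟨x₀, hx₀⟩ := Set.nonempty_iff_ne_empty.2 hne
    have hUopen : IsOpen (interior (closure (⋃ n, K n))) := isOpen_interior
    obtain ⟨V, hVopen, hVU⟩ :=
      (@isOpen_induced_iff _ _ (rho I) (interior (closure (⋃ n, K n))) Subtype.val).1 hUopen
    have hx₀V : (x₀ : {θ // θ ∈ XX}).1 ∈ V := by
      rw [← hVU] at hx₀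
      exact hx₀
    have hGen : TopologicalSpace.GenerateOpen (rhoGens I) V := hVopen
    obtain ⟨c, hcI, hx₀c, hcV⟩ := cell_extract I hGen x₀.1 hx₀V
    -- fresh column
    set q : ℕ := (c.map fun x => x.2.1).foldr max 0 + 1 with hqdef
    have hqfresh : ∀ x ∈ c, x.2.1 ≠ q := by
      intro x hx
      have : x.2.1 ≤ (c.map fun x => x.2.1).foldr max 0 :=
        le_foldr_max_s14 _ _ (List.mem_map.2 ⟨x, hx, rfl⟩)
      omega
    -- the witness position used by a member of D n at column q
    set WF : ℕ → (Pt → Bool) → ℕ := fun n θ =>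
      if h : ∃ w, ∀ α : ℕ → Bool, α w = (A n).boolIndicator w → θ (α, q) = true
      then h.choose else 0 with hWFdef
    -- the diagonal blocking set
    set E : Set ℕ := {k | ∃ n, ∃ θ ∈ K n, k = WF n (θ : {θ // θ ∈ XX}).1 ∧ k ∈ A n} with hEdef
    have hEI : E ∈ I := by
      by_contra hEn
      obtain ⟨N, hNinf⟩ := hps E hEn
      apply hNinf
      have hsub : E \ A N ⊆
          ⋃ n ∈ Finset.range N, (fun θ : {θ // θ ∈ XX} => WF n θ.1) '' K n := by
        rintro k ⟨⟨n, θ, hθK, rfl, hkA⟩, hkN⟩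
        have hnN : n < N := by
          by_contra hge
          push_neg at hge
          exact hkN (hmono hge hkA)
        exact Set.mem_biUnion (Finset.mem_range.2 hnN) ⟨θ, hθK, rfl⟩
      exact (Set.Finite.biUnion (Finset.range N).finite_toSet
        (fun n _ => (hKfin n).image _)).subset hsub
    -- a small positive trigger set, different from E and ∅
    set B : Set ℕ := if E = {0} then {1} else {0} with hBdef
    have hBI : B ∈ I := by
      rw [hBdef]
      split_ifs
      · exact hI.2.2 {1} (Set.finite_singleton 1)
      · exact hI.2.2 {0} (Set.finite_singleton 0)
    have hBE : B ≠ E := by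
      rw [hBdef]
      split_ifs with h
      · rw [h]
        intro hc'
        have h1 : (1 : ℕ) ∈ ({1} : Set ℕ) := rfl
        rw [hc'] at h1
        simp at h1
      · intro hc'
        exact h hc'.symm
    have hB0 : B ≠ (∅ : Set ℕ) := by
      rw [hBdef]
      split_ifs
      · exact fun hc' => absurd (hc' ▸ rfl : (1:ℕ) ∈ (∅ : Set ℕ)) (Set.notMem_empty 1)
      · exact fun hc' => absurd (hc' ▸ rfl : (0:ℕ) ∈ (∅ : Set ℕ)) (Set.notMem_empty 0)
    set L' : ℕ := max (diffIdx B.boolIndicator E.boolIndicator)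
        (diffIdx B.boolIndicator (∅ : Set ℕ).boolIndicator) + 1 with hL'def
    set c' : List (Set ℕ × ℕ × Bool) :=
      (B, q, true) :: (E, q, false) :: ((∅ : Set ℕ), q, false) :: c with hc'def
    have hc'I : ∀ x ∈ c', x.1 ∈ I := by
      intro x hx
      rw [hc'def] at hx
      rcases List.mem_cons.1 hx with rfl | hx
      · exact hBI
      rcases List.mem_cons.1 hx with rfl | hx
      · exact hEI
      rcases List.mem_cons.1 hx with rfl | hx
      · exact hI.2.2 ∅ Set.finite_empty
      · exact hcI x hx
    have hc'sub : cellSet c' ⊆ cellSet c := by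
      intro θ hθ x hx
      exact hθ x (by rw [hc'def]; exact List.mem_cons_of_mem _ (List.mem_cons_of_mem _
        (List.mem_cons_of_mem _ hx)))
    -- the witness element of the refined cell
    obtain ⟨L₀, hL₀⟩ := x₀.2
    set θs : Pt → Bool :=
      xxMk ((L₀.filter fun r => decide (r.2.2 ≠ q)) ++ [(B.boolIndicator, L', q)]) with hθsdef
    have hθsX : θs ∈ XX := xxMk_mem_XX _
    have hθscol : ∀ β : ℕ → Bool, ∀ p : ℕ, p ≠ q → θs (β, p) = x₀.1 (β, p) := by
      intro β p hp
      have h1 : θs (β, p) = true ↔ x₀.1 (β, p) = true := by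
        rw [hθsdef, xxMk_eq_true, hL₀ (β, p)]
        constructor
        · rintro ⟨r, hr, hcol, hmatch⟩
          rcases List.mem_append.1 hr with hr | hr
          · exact ⟨r, (List.mem_filter.1 hr).1, hcol, hmatch⟩
          · rcases List.mem_singleton.1 hr with rfl
            exact absurd hcol hp
        · rintro ⟨r, hr, hcol, hmatch⟩
          refine ⟨r, List.mem_append.2 (Or.inl (List.mem_filter.2 ⟨hr, ?_⟩)), hcol, hmatch⟩
          simp only [decide_eq_true_eq]
          rw [← hcol]
          exact hp
      cases h : x₀.1 (β, p) with
      | true => exact h1.2 h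
      | false =>
        rw [Bool.eq_false_iff]
        intro htr
        rw [h1.1 htr] at h
        cases h
    have hθsc' : θs ∈ cellSet c' := by
      intro x hx
      rw [hc'def] at hx
      rcases List.mem_cons.1 hx with rfl | hx
      · -- (B, q, true)
        rw [hθsdef, xxMk_eq_true]
        exact ⟨(B.boolIndicator, L', q),
          List.mem_append.2 (Or.inr (List.mem_singleton_self _)), rfl, fun i _ => rfl⟩
      rcases List.mem_cons.1 hx with rfl | hx
      · -- (E, q, false)
        rw [hθsdef, Bool.eq_false_iff]
        intro htr
        rw [xxMk_eq_true] at htr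
        obtain ⟨r, hr, hcol, hmatch⟩ := htr
        rcases List.mem_append.1 hr with hr | hr
        · have := (List.mem_filter.1 hr).2
          simp only [decide_eq_true_eq] at this
          exact this hcol.symm
        · rcases List.mem_singleton.1 hr with rfl
          have hne : E.boolIndicator ≠ B.boolIndicator :=
            fun he => boolIndicator_ne_of_ne hBE he.symm
          have hd := diffIdx_spec (fun he => hne he.symm)
          refine hd ?_
          have := hmatch (diffIdx B.boolIndicator E.boolIndicator)
            (Nat.lt_succ_of_le (le_max_left _ _))
          exact this.symm
      rcases List.mem_cons.1 hx with rfl | hx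
      · -- (∅, q, false)
        rw [hθsdef, Bool.eq_false_iff]
        intro htr
        rw [xxMk_eq_true] at htr
        obtain ⟨r, hr, hcol, hmatch⟩ := htr
        rcases List.mem_append.1 hr with hr | hr
        · have := (List.mem_filter.1 hr).2
          simp only [decide_eq_true_eq] at this
          exact this hcol.symm
        · rcases List.mem_singleton.1 hr with rfl
          have hne : B.boolIndicator ≠ (∅ : Set ℕ).boolIndicator :=
            boolIndicator_ne_of_ne hB0
          have hd := diffIdx_spec hne
          refine hd ?_
          have := hmatch (diffIdx B.boolIndicator (∅ : Set ℕ).boolIndicator)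
            (Nat.lt_succ_of_le (le_max_right _ _))
          exact this.symm
      · -- conditions from c, at columns ≠ q
        rw [hθscol _ _ (hqfresh x hx)]
        exact hx₀c x hx
    have hθsV : θs ∈ V := hcV (hc'sub hθsc')
    have hθsmem : (⟨θs, hθsX⟩ : {θ // θ ∈ XX}) ∈ interior (closure (⋃ n, K n)) := by
      rw [← hVU]
      exact hθsV
    have hθscl : (⟨θs, hθsX⟩ : {θ // θ ∈ XX}) ∈ closure (⋃ n, K n) :=
      interior_subset hθsmem
    -- the refined open set
    have hU'open : IsOpen (Subtype.val ⁻¹' cellSet c' : Set {θ // θ ∈ XX}) :=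
      (@isOpen_induced_iff _ _ (rho I) _ Subtype.val).2
        ⟨cellSet c', cellSet_generateOpen I c' hc'I, rfl⟩
    have hmeet := (mem_closure_iff.1 hθscl) _ hU'open hθsc'
    obtain ⟨y, hyU', hyS⟩ := hmeet
    obtain ⟨n, hyK⟩ := Set.mem_iUnion.1 hyS
    have hyc' : y.1 ∈ cellSet c' := hyU'
    have hBtrue : y.1 (B.boolIndicator, q) = true := by
      have := hyc' (B, q, true) (by rw [hc'def]; exact List.mem_cons_self)
      exact this
    have hDn := hKD n hyK
    have hex : ∃ w, ∀ α : ℕ → Bool, α w = (A n).boolIndicator w → y.1 (α, q) = true :=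
      hDn q ⟨B.boolIndicator, hBtrue⟩
    have hWFy : ∀ α : ℕ → Bool,
        α (WF n y.1) = (A n).boolIndicator (WF n y.1) → y.1 (α, q) = true := by
      have : WF n y.1 = hex.choose := by
        rw [hWFdef]
        exact dif_pos hex
      rw [this]
      exact hex.choose_spec
    cases hbit : (A n).boolIndicator (WF n y.1) with
    | true =>
      have hkA : WF n y.1 ∈ A n := (Set.mem_iff_boolIndicator _ _).2 hbit
      have hkE : WF n y.1 ∈ E := by
        rw [hEdef]
        exact ⟨n, y, hyK, rfl, hkA⟩
      have h1 : y.1 (E.boolIndicator, q) = true := by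
        apply hWFy
        rw [hbit]
        exact (Set.mem_iff_boolIndicator _ _).1 hkE
      have h2 : y.1 (E.boolIndicator, q) = false :=
        hyc' (E, q, false) (by rw [hc'def]; exact List.mem_cons_of_mem _ (List.mem_cons_self))
      rw [h1] at h2
      cases h2
    | false =>
      have h1 : y.1 ((∅ : Set ℕ).boolIndicator, q) = true := by
        apply hWFy
        rw [hbit]
        exact (Set.notMem_iff_boolIndicator _ _).1 (Set.notMem_empty _)
      have hmemc : ((∅ : Set ℕ), q, false) ∈ c' := by
        rw [hc'def]
        exact List.mem_cons_of_mem _ (List.mem_cons_of_mem _ (List.mem_cons_self))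
      have h2 : y.1 ((∅ : Set ℕ).boolIndicator, q) = false := hyc' ((∅ : Set ℕ), q, false) hmemc
      rw [h1] at h2
      cases h2
end
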